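/- Let c_1,...,c_T ∈ {0,1} with ∑_t c_t ≤ C for some C ≥ 1. Let G_t be independent random variables with G_t = c_t with probability 1/C and G_t = 0 otherwise. Then with probability at least 1−δ, ∑_{t=1}^T G_t ≤ log(1/δ) + 3. -/

import Mathlib

open MeasureTheory ProbabilityTheory

private lemma stmt1_fact_lb : ∀ k : ℕ, Real.exp k ≤ Real.exp 2 * k.factorial := by
  intro k
  induction k with
  | zero =>
      simpa using Real.one_le_exp (by norm_num : (0:ℝ) ≤ 2)
  | succ n ih =>
      rcases Nat.lt_or_ge n 2 with h | h
      · interval_cases n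
        · simpa using Real.exp_le_exp.mpr (by norm_num : (1:ℝ) ≤ 2)
        · have : (0:ℝ) < Real.exp 2 := Real.exp_pos 2
          norm_num [Nat.factorial]
          nlinarith
      · have h3 : Real.exp 1 ≤ 3 := by
          have := Real.exp_one_lt_d9
          nlinarith
        have hn3 : (3:ℝ) ≤ (n:ℝ) + 1 := by
          have : (2:ℝ) ≤ n := by exact_mod_cast h
          linarith
        have : Real.exp (↑(n+1)) = Real.exp n * Real.exp 1 := by
          push_cast; rw [← Real.exp_add]
        rw [this]
        have hfe : (0:ℝ) ≤ Real.exp 2 * n.factorial := by positivity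
        calc Real.exp n * Real.exp 1 ≤ (Real.exp 2 * n.factorial) * ((n:ℝ)+1) := by
              have h1 : Real.exp 1 ≤ (n:ℝ)+1 := le_trans h3 hn3
              nlinarith [Real.exp_pos (n:ℝ), ih, Real.exp_pos 1]
          _ = Real.exp 2 * ((n+1).factorial) := by
              rw [Nat.factorial_succ]; push_cast; ring

/-- Corruption observed by the slow instance of CascadeRKC: with `c t ∈ {0,1}`,
`∑ c t ≤ C`, and `G t = c t · B t` where the `B t` are independent Bernoulli(1/C)
sampling indicators, with probability at least `1 - δ` the total observed
corruption satisfies `∑ G t ≤ log(1/δ) + 3`. -/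
theorem stmt1 {Ω : Type*} {m0 : MeasurableSpace Ω} (μ : Measure Ω) [IsProbabilityMeasure μ]
    (T : ℕ) (C : ℝ) (hC : 1 ≤ C)
    (c : Fin T → ℝ) (hc01 : ∀ t, c t = 0 ∨ c t = 1)
    (hcsum : ∑ t, c t ≤ C)
    (B : Fin T → Ω → ℝ)
    (hmeas : ∀ t, Measurable (B t))
    (hindep : iIndepFun (m := fun _ => (inferInstance : MeasurableSpace ℝ)) B μ)
    (hB01 : ∀ t, ∀ ω, B t ω = 0 ∨ B t ω = 1)
    (hBmean : ∀ t, μ {ω | B t ω = 1} = ENNReal.ofReal (1 / C))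
    (δ : ℝ) (hδ : δ ∈ Set.Ioo (0 : ℝ) 1) :
    ENNReal.ofReal (1 - δ) ≤
      μ {ω | ∑ t, c t * B t ω ≤ Real.log (1 / δ) + 3} := by
  classical
  obtain ⟨hδ0, hδ1⟩ := hδ
  have hC0 : (0:ℝ) < C := lt_of_lt_of_le one_pos hC
  set L : ℝ := Real.log (1 / δ) + 3 with hLdef
  have hlogpos : 0 < Real.log (1 / δ) := Real.log_pos (by rw [lt_div_iff₀ hδ0]; linarith)
  have hL0 : 0 < L := by positivity
  set k : ℕ := ⌊L⌋₊ + 1 with hkdef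
  have hkL : L < k := by exact_mod_cast Nat.lt_floor_add_one L
  -- the candidate set
  set A : Finset (Fin T) := Finset.univ.filter (fun t => c t = 1) with hA
  have hcard_le : (A.card : ℝ) ≤ C := by
    have : (A.card : ℝ) = ∑ t ∈ A, c t := by
      rw [Finset.card_eq_sum_ones]
      push_cast
      refine Finset.sum_congr rfl fun t ht => ?_
      rw [(Finset.mem_filter.1 ht).2]
    rw [this]
    refine le_trans (Finset.sum_le_sum_of_subset_of_nonneg (Finset.subset_univ A) ?_) hcsum
    intro t _ _
    rcases hc01 t with h | h <;> rw [h] <;> norm_num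
  -- measurability of the sum
  have hsum_meas : Measurable (fun ω => ∑ t, c t * B t ω) :=
    Finset.measurable_sum _ fun t _ => (measurable_const.mul (hmeas t))
  have hEmeas : MeasurableSet {ω | L < ∑ t, c t * B t ω} :=
    measurableSet_lt measurable_const hsum_meas
  -- bad event inclusion
  have hincl : {ω | L < ∑ t, c t * B t ω} ⊆
      ⋃ s ∈ A.powersetCard k, ⋂ t ∈ s, B t ⁻¹' {1} := by
    intro ω hω
    simp only [Set.mem_setOf_eq] at hω
    set S : Finset (Fin T) := Finset.univ.filter (fun t => c t = 1 ∧ B t ω = 1) with hS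
    have hsum_eq : ∑ t, c t * B t ω = S.card := by
      rw [hS, ← Finset.sum_boole]
      refine Finset.sum_congr rfl fun t _ => ?_
      rcases hc01 t with h | h <;> rcases hB01 t ω with h' | h' <;>
        simp [h, h']
    rw [hsum_eq] at hω
    have hkS : k ≤ S.card := by
      rw [hkdef]
      exact Nat.succ_le_of_lt ((Nat.floor_lt hL0.le).2 hω)
    obtain ⟨s, hsS, hscard⟩ := Finset.exists_subset_card_eq hkS
    have hsA : s ∈ A.powersetCard k := by
      rw [Finset.mem_powersetCard]
      refine ⟨?_, hscard⟩
      intro t ht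
      have := Finset.mem_filter.1 (hsS ht)
      exact Finset.mem_filter.2 ⟨Finset.mem_univ t, this.2.1⟩
    refine Set.mem_biUnion hsA ?_
    simp only [Set.mem_iInter, Set.mem_preimage, Set.mem_singleton_iff]
    intro t ht
    exact (Finset.mem_filter.1 (hsS ht)).2.2
  -- union bound
  have hmeas_inter : ∀ s : Finset (Fin T),
      μ (⋂ t ∈ s, B t ⁻¹' {1}) = ENNReal.ofReal (1/C) ^ s.card := by
    intro s
    have := hindep.measure_inter_preimage_eq_mul s
      (sets := fun _ => ({1} : Set ℝ)) (fun i _ => measurableSet_singleton 1)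
    rw [this, Finset.prod_congr rfl (fun t _ => ?_), Finset.prod_const]
    have : B t ⁻¹' {1} = {ω | B t ω = 1} := rfl
    rw [this, hBmean t]
  have hbad : μ {ω | L < ∑ t, c t * B t ω} ≤ ENNReal.ofReal δ := by
    calc μ {ω | L < ∑ t, c t * B t ω}
        ≤ μ (⋃ s ∈ A.powersetCard k, ⋂ t ∈ s, B t ⁻¹' {1}) := measure_mono hincl
      _ ≤ ∑ s ∈ A.powersetCard k, μ (⋂ t ∈ s, B t ⁻¹' {1}) :=
          measure_biUnion_finset_le _ _
      _ = ∑ s ∈ A.powersetCard k, ENNReal.ofReal (1/C) ^ k := by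
          refine Finset.sum_congr rfl fun s hs => ?_
          rw [hmeas_inter s, (Finset.mem_powersetCard.1 hs).2]
      _ = (A.card.choose k : ℕ) * ENNReal.ofReal (1/C) ^ k := by
          rw [Finset.sum_const, Finset.card_powersetCard, nsmul_eq_mul]
      _ = ENNReal.ofReal ((A.card.choose k : ℝ) * (1/C) ^ k) := by
          rw [ENNReal.ofReal_mul (by positivity), ← ENNReal.ofReal_pow (by positivity),
            ENNReal.ofReal_natCast]
      _ ≤ ENNReal.ofReal δ := by
          apply ENNReal.ofReal_le_ofReal
          -- the real inequality
          set n := A.card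
          have h1 : (n.choose k : ℝ) * (k.factorial : ℝ) ≤ (n:ℝ) ^ k := by
            have := Nat.descFactorial_le_pow n k
            have h2 := Nat.descFactorial_eq_factorial_mul_choose n k
            have : n.choose k * k.factorial ≤ n ^ k := by
              rw [Nat.mul_comm, ← h2]; exact Nat.descFactorial_le_pow n k
            exact_mod_cast this
          have hfactpos : (0:ℝ) < (k.factorial : ℝ) := by exact_mod_cast k.factorial_pos
          have hnC : (n:ℝ)^k ≤ C^k := pow_le_pow_left₀ (Nat.cast_nonneg n) hcard_le k
          have h3 : (n.choose k : ℝ) * (1/C)^k ≤ 1 / (k.factorial : ℝ) := by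
            rw [div_pow, one_pow, mul_one_div, div_le_div_iff₀ (by positivity) hfactpos,
              one_mul]
            exact h1.trans hnC
          have hfdelta : (1:ℝ)/δ ≤ (k.factorial : ℝ) := by
            have hlb := stmt1_fact_lb k
            have he2 : (0:ℝ) < Real.exp 2 := Real.exp_pos 2
            have h5 : Real.exp ((k:ℝ) - 2) ≤ (k.factorial : ℝ) := by
              rw [Real.exp_sub, div_le_iff₀ he2] at *
              nlinarith
            refine le_trans ?_ h5
            have h6 : Real.log (1/δ) + 1 ≤ (k:ℝ) - 2 := by
              have : L < k := hkL
              rw [hLdef] at this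
              linarith
            calc (1:ℝ)/δ ≤ (1/δ) * Real.exp 1 := by
                  nlinarith [Real.one_le_exp (by norm_num : (0:ℝ) ≤ 1), div_pos one_pos hδ0]
              _ = Real.exp (Real.log (1/δ) + 1) := by
                  rw [Real.exp_add, Real.exp_log (by positivity)]
              _ ≤ Real.exp ((k:ℝ) - 2) := Real.exp_le_exp.mpr h6
          have h4 : 1 / (k.factorial : ℝ) ≤ δ := by
            rw [div_le_iff₀ hfactpos]
            rw [div_le_iff₀ hδ0] at hfdelta
            nlinarith
          exact h3.trans h4
  -- conclusion
  have hset : {ω | ∑ t, c t * B t ω ≤ L} = {ω | L < ∑ t, c t * B t ω}ᶜ := by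
    ext ω; simp [not_lt]
  have : ENNReal.ofReal (1 - δ) ≤ μ {ω | ∑ t, c t * B t ω ≤ L} := by
    rw [hset, prob_compl_eq_one_sub hEmeas]
    calc ENNReal.ofReal (1 - δ) = 1 - ENNReal.ofReal δ := by
          rw [ENNReal.ofReal_sub _ hδ0.le, ENNReal.ofReal_one]
      _ ≤ 1 - μ {ω | L < ∑ t, c t * B t ω} := tsub_le_tsub_left hbad 1
  exact this
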